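/- For every n ≥ 9, the sequence π = (n−2, 4, 3^{n−2}) of n terms is potentially K_{3,3}-graphic. -/

import Mathlib

/-- `π` is the degree sequence (as a multiset) of the simple graph `G`. -/
def IsDegSeqOf {V : Type} [Fintype V] (G : SimpleGraph V) (π : List ℕ) : Prop :=
  Multiset.map (fun v => (G.neighborSet v).ncard) Finset.univ.val = (π : Multiset ℕ)

/-- `π` is graphic: it is realized by some simple graph on `π.length` vertices. -/
def IsGraphic (π : List ℕ) : Prop :=
  ∃ G : SimpleGraph (Fin π.length), IsDegSeqOf G π

/-- `π` is potentially `H`-graphic: some realization of `π` contains a copy of `H`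
as a subgraph (an injective graph homomorphism from `H`). -/
def PotentiallyGraphic {W : Type} (H : SimpleGraph W) (π : List ℕ) : Prop :=
  ∃ G : SimpleGraph (Fin π.length), IsDegSeqOf G π ∧ ∃ f : H →g G, Function.Injective f

/-- The complete bipartite graph `K_{3,3}`. -/
def K33 : SimpleGraph (Fin 3 ⊕ Fin 3) := completeBipartiteGraph (Fin 3) (Fin 3)

/-- `K_6 − C_6`, the complement of the 6-cycle. -/
def K6mC6 : SimpleGraph (Fin 6) := (SimpleGraph.cycleGraph 6)ᶜ

/-- Auxiliary base relation for our realization: vertex `0` is joined to everything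
except `2`; vertices `1, 2` are joined to `3, 4, 5`; vertices `6, …, n-1` form a cycle. -/
def relA (n a b : ℕ) : Prop :=
  (a = 0 ∧ b ≠ 2 ∧ b ≠ 0) ∨
  (1 ≤ a ∧ a ≤ 2 ∧ 3 ≤ b ∧ b ≤ 5) ∨
  (6 ≤ a ∧ b = a + 1 ∧ b < n) ∨
  (a = 6 ∧ b = n - 1)

/-- Intended neighborhood (as a set of natural values) of each vertex. -/
def svalA (n v : ℕ) : Finset ℕ :=
  if v = 0 then (Finset.range n) \ {0, 2}
  else if v = 1 then {0, 3, 4, 5}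
  else if v = 2 then {3, 4, 5}
  else if v ≤ 5 then {0, 1, 2}
  else {0, if v = 6 then n - 1 else v - 1, if v = n - 1 then 6 else v + 1}

/-- The realization graph. -/
def GG (n : ℕ) : SimpleGraph (Fin n) :=
  SimpleGraph.fromRel (fun a b => relA n a.val b.val)

lemma adj_iff (n : ℕ) (hn : 9 ≤ n) (v b : Fin n) :
    (GG n).Adj v b ↔ b.val ∈ svalA n v.val := by
  have hv := v.isLt
  have hb := b.isLt
  rw [GG, SimpleGraph.fromRel_adj, ne_eq, ← Fin.val_eq_val]
  unfold relA svalA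
  split_ifs <;>
    simp only [Finset.mem_sdiff, Finset.mem_range, Finset.mem_insert,
      Finset.mem_singleton] <;> omega

lemma sval_lt (n : ℕ) (hn : 9 ≤ n) (v : ℕ) (hv : v < n) :
    ∀ m ∈ svalA n v, m < n := by
  intro m hm
  unfold svalA at hm
  split_ifs at hm <;>
    simp only [Finset.mem_sdiff, Finset.mem_range, Finset.mem_insert,
      Finset.mem_singleton] at hm <;> omega

lemma card3 {a b c : ℕ} (h1 : a ≠ b) (h2 : a ≠ c) (h3 : b ≠ c) :
    ({a, b, c} : Finset ℕ).card = 3 := by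
  rw [Finset.card_insert_of_notMem (by simp [h1, h2]),
    Finset.card_insert_of_notMem (by simp [h3]), Finset.card_singleton]

lemma sval_card (n : ℕ) (hn : 9 ≤ n) (v : ℕ) (hv : v < n) :
    (svalA n v).card = if v = 0 then n - 2 else if v = 1 then 4 else 3 := by
  unfold svalA
  split_ifs with h0 h1 h2 h3 h4 h5 h6
  · rw [Finset.card_sdiff_of_subset (by intro x hx; simp at hx; simp; omega)]
    have h2 : ({0, 2} : Finset ℕ).card = 2 := by decide
    rw [Finset.card_range, h2]
  · decide
  · decide
  · decide
  · omega
  · apply card3 <;> omega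
  · apply card3 <;> omega
  · apply card3 <;> omega

lemma deg_eq (n : ℕ) (hn : 9 ≤ n) (v : Fin n) :
    ((GG n).neighborSet v).ncard
      = if v.val = 0 then n - 2 else if v.val = 1 then 4 else 3 := by
  have hset : (GG n).neighborSet v
      = ↑((svalA n v.val).attachFin (sval_lt n hn v.val v.isLt)) := by
    ext b
    simp [SimpleGraph.mem_neighborSet, adj_iff n hn, Finset.mem_attachFin]
  rw [hset, Set.ncard_coe_finset, Finset.card_attachFin]
  exact sval_card n hn v.val v.isLt

lemma degseq (n : ℕ) (hn : 9 ≤ n) :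
    Multiset.map (fun v : Fin n => ((GG n).neighborSet v).ncard) Finset.univ.val
      = (([n - 2, 4] ++ List.replicate (n - 2) 3 : List ℕ) : Multiset ℕ) := by
  have h1 : Multiset.map (fun v : Fin n => ((GG n).neighborSet v).ncard) Finset.univ.val
      = Multiset.map (fun k : ℕ => if k = 0 then n - 2 else if k = 1 then 4 else 3)
          (Multiset.map Fin.val (Finset.univ : Finset (Fin n)).val) := by
    rw [Multiset.map_map]
    exact Multiset.map_congr rfl (fun v _ => deg_eq n hn v)
  have h2 : Multiset.map Fin.val (Finset.univ : Finset (Fin n)).val = Multiset.range n := by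
    have h0 : (Finset.univ : Finset (Fin n)).val = ↑(List.finRange n) := rfl
    rw [h0, Multiset.map_coe, show (List.finRange n).map Fin.val = List.range n from
      List.ext_getElem (by simp) (by simp)]; rfl
  have h3 : Multiset.range n = Multiset.range 2 + (Multiset.range (n - 2)).map (2 + ·) := by
    rw [← Multiset.range_add]; congr 1; omega
  rw [h1, h2, h3, Multiset.map_add]
  have h4 : Multiset.map (fun k : ℕ => if k = 0 then n - 2 else if k = 1 then 4 else 3)
      ((Multiset.range (n - 2)).map (2 + ·)) = Multiset.replicate (n - 2) 3 := by
    rw [Multiset.map_map, Multiset.eq_replicate]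
    refine ⟨by simp, ?_⟩
    intro b hb
    simp only [Multiset.mem_map, Multiset.mem_range, Function.comp] at hb
    obtain ⟨x, -, hx⟩ := hb
    split_ifs at hx <;> omega
  rw [h4]
  have h5 : Multiset.range 2 = (([0, 1] : List ℕ) : Multiset ℕ) := rfl
  rw [h5, Multiset.map_coe, ← Multiset.coe_replicate, ← Multiset.coe_add]
  congr 1

lemma adj_cross (n : ℕ) (hn : 9 ≤ n) (v w : Fin n)
    (h : v.val < 3 ∧ 3 ≤ w.val ∧ w.val < 6) : (GG n).Adj v w := by
  rw [adj_iff n hn]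
  unfold svalA
  split_ifs <;>
    simp only [Finset.mem_sdiff, Finset.mem_range, Finset.mem_insert,
      Finset.mem_singleton] <;> omega

/-- For every `n ≥ 9`, the sequence `(n−2, 4, 3^{n−2})` is potentially `K_{3,3}`-graphic. -/
theorem potentially_K33_nsub2_four_threes (n : ℕ) (hn : 9 ≤ n) :
    PotentiallyGraphic K33 ([n - 2, 4] ++ List.replicate (n - 2) 3) := by
  have hlen : ([n - 2, 4] ++ List.replicate (n - 2) 3).length = n := by
    simp; omega
  unfold PotentiallyGraphic
  rw [hlen]
  refine ⟨GG n, degseq n hn, ?_⟩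
  refine ⟨⟨Sum.elim (fun i => ⟨i.val, lt_of_lt_of_le i.isLt (by omega)⟩)
      (fun j => ⟨j.val + 3, by omega⟩), ?_⟩, ?_⟩
  · intro a b hab
    rcases a with i | i <;> rcases b with j | j
    · simp [K33] at hab
    · exact adj_cross n hn _ _ (by
        have hi := i.isLt; have hj := j.isLt
        simp only [Sum.elim_inl, Sum.elim_inr]
        refine ⟨by omega, by omega, by omega⟩)
    · exact ((GG n).adj_symm (adj_cross n hn _ _ (by
        have hi := i.isLt; have hj := j.isLt
        simp only [Sum.elim_inl, Sum.elim_inr]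
        refine ⟨by omega, by omega, by omega⟩)))
    · simp [K33] at hab
  · intro a b hab
    replace hab : Sum.elim (fun i : Fin 3 => (⟨i.val, lt_of_lt_of_le i.isLt (by omega)⟩ : Fin n))
        (fun j : Fin 3 => (⟨j.val + 3, by omega⟩ : Fin n)) a
        = Sum.elim (fun i : Fin 3 => (⟨i.val, lt_of_lt_of_le i.isLt (by omega)⟩ : Fin n))
        (fun j : Fin 3 => (⟨j.val + 3, by omega⟩ : Fin n)) b := hab
    rcases a with i | i <;> rcases b with j | j <;>
      have hi := i.isLt <;> have hj := j.isLt <;>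
      simp only [Sum.elim_inl, Sum.elim_inr, Fin.mk.injEq] at hab
    · exact congrArg Sum.inl (Fin.ext hab)
    · exact absurd hab (by omega)
    · exact absurd hab (by omega)
    · exact congrArg Sum.inr (Fin.ext (by omega))
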